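/- Let w be a string of length n over an alphabet of size σ. For positions 1 ≤ i' ≤ i ≤ n and an integer k ≥ 0, say that i is k-active at i' if i is a leftmost occurrence in the suffix w[i'..n] (i.e., w[j] ≠ w[i] for all i' ≤ j < i) and 2^k ≤ i − i' + 1 < 2^{k+1}. For each position i, let k_i be the largest k such that i is k-active at some i' (this is well defined since i is 0-active at i' = i). Then Σ_{i=1}^{n} Σ_{k=0}^{k_i} 2^k ≤ n + 2σn. -/

import Mathlib

/-- Strings are modelled as functions `w : ℕ → α` (1-indexed); a string of length `n`
uses positions `1..n`. `OpIso w i j ℓ` says the fragments `w[i..i+ℓ-1]` and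
`w[j..j+ℓ-1]` are order-isomorphic. -/
def OpIso {α : Type*} [LinearOrder α] (w : ℕ → α) (i j ℓ : ℕ) : Prop :=
  ∀ a b : ℕ, a < ℓ → b < ℓ → (w (i + a) ≤ w (i + b) ↔ w (j + a) ≤ w (j + b))

/-- The fragment `w[i..i+2ℓ-1]` is an order-preserving square: its two arms of length `ℓ`
are order-isomorphic but not equal as words. -/
def IsOpSquareAt {α : Type*} [LinearOrder α] (w : ℕ → α) (i ℓ : ℕ) : Prop :=
  OpIso w i (i + ℓ) ℓ ∧ ∃ a : ℕ, a < ℓ ∧ w (i + a) ≠ w (i + ℓ + a)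

/-- Position `i` is a leftmost occurrence in `w`: no earlier position carries the same character. -/
def Leftmost {α : Type*} [LinearOrder α] (w : ℕ → α) (i : ℕ) : Prop :=
  ∀ j : ℕ, 1 ≤ j → j < i → w j ≠ w i

/-- `b` is an op-border of the fragment of length `m` starting at position `i`:
its prefix of length `b` is order-isomorphic to its suffix of length `b`. -/
def OpBorderAt {α : Type*} [LinearOrder α] (w : ℕ → α) (i m b : ℕ) : Prop :=
  b ≤ m ∧ OpIso w i (i + (m - b)) b
/-- Position i is k-active at i' (in a string w of length n): 1 ≤ i' ≤ i ≤ n, i is a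
leftmost occurrence in the suffix w[i'..n], and 2^k ≤ i − i' + 1 < 2^{k+1}. -/
def ActiveAt {α : Type*} [LinearOrder α] (w : ℕ → α) (n i i' k : ℕ) : Prop :=
  1 ≤ i' ∧ i' ≤ i ∧ i ≤ n ∧ (∀ j : ℕ, i' ≤ j → j < i → w j ≠ w i) ∧
    2 ^ k ≤ i - i' + 1 ∧ i - i' + 1 < 2 ^ (k + 1)

/-- With k_i the largest k such that i is k-active at some i',
Σ_{i=1}^{n} Σ_{k=0}^{k_i} 2^k ≤ n + 2σn. -/
theorem sum_of_active_ranges (σ : ℕ) (α : Type) [LinearOrder α] [Fintype α]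
    (hcard : Fintype.card α = σ) (n : ℕ) (w : ℕ → α) (K : ℕ → ℕ)
    (hK : ∀ i : ℕ, 1 ≤ i → i ≤ n →
      (∃ i' : ℕ, ActiveAt w n i i' (K i)) ∧
      (∀ k i' : ℕ, ActiveAt w n i i' k → k ≤ K i)) :
    ∑ i ∈ Finset.Icc 1 n, ∑ k ∈ Finset.range (K i + 1), 2 ^ k ≤ n + 2 * σ * n := by
  classical
  have hfex : ∀ i : ℕ, ∃ j : ℕ, 1 ≤ i → i ≤ n → ActiveAt w n i j (K i) := by
    intro i
    by_cases h : 1 ≤ i ∧ i ≤ n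
    · exact ⟨((hK i h.1 h.2).1).choose, fun _ _ => ((hK i h.1 h.2).1).choose_spec⟩
    · exact ⟨i, fun h1 h2 => absurd ⟨h1, h2⟩ h⟩
  choose f hfspec using hfex
  have hgeom : ∀ m : ℕ, ∑ k ∈ Finset.range m, 2 ^ k = 2 ^ m - 1 := by
    intro m
    induction m with
    | zero => simp
    | succ m ih =>
      rw [Finset.sum_range_succ, ih]
      have h1 : 1 ≤ 2 ^ m := Nat.one_le_two_pow
      have h2 : (2:ℕ) ^ (m + 1) = 2 * 2 ^ m := by ring
      omega
  have hstep : ∀ i ∈ Finset.Icc 1 n,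
      ∑ k ∈ Finset.range (K i + 1), 2 ^ k ≤ 2 * (i - f i) + 1 := by
    intro i hi
    rw [Finset.mem_Icc] at hi
    obtain ⟨h1, h2, h3, h4, h5, h6⟩ := hfspec i hi.1 hi.2
    rw [hgeom]
    have hp : (2:ℕ) ^ (K i + 1) = 2 * 2 ^ (K i) := by ring
    omega
  have hcount : ∑ i ∈ Finset.Icc 1 n, (i - f i) ≤ σ * n := by
    have h1 : ∑ i ∈ Finset.Icc 1 n, (i - f i)
        = ((Finset.Icc 1 n).sigma (fun i => Finset.Ico (f i) i)).card := by
      rw [Finset.card_sigma]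
      exact Finset.sum_congr rfl (fun i hi => (Nat.card_Ico _ _).symm)
    rw [h1]
    have hle := Finset.card_le_card_of_injOn (f := fun p : Σ _ : ℕ, ℕ => (w p.1, p.2))
      (s := (Finset.Icc 1 n).sigma (fun i => Finset.Ico (f i) i))
      (t := Finset.univ ×ˢ Finset.Icc 1 n) ?_ ?_
    · simpa [Finset.card_product, hcard, Nat.card_Icc] using hle
    · intro p hp
      simp only [Finset.mem_coe, Finset.mem_sigma, Finset.mem_Icc, Finset.mem_Ico] at hp
      obtain ⟨⟨h1, h2⟩, h3, h4⟩ := hp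
      have hf1 : 1 ≤ f p.1 := (hfspec p.1 h1 h2).1
      simp only [Finset.mem_coe, Finset.mem_product, Finset.mem_univ, Finset.mem_Icc, true_and]
      omega
    · intro p hp q hq heq
      simp only [Finset.mem_coe, Finset.mem_sigma, Finset.mem_Icc, Finset.mem_Ico] at hp hq
      simp only [Prod.mk.injEq] at heq
      obtain ⟨hw, hj⟩ := heq
      obtain ⟨⟨hp1, hp2⟩, hp3, hp4⟩ := hp
      obtain ⟨⟨hq1, hq2⟩, hq3, hq4⟩ := hq
      have h5q := (hfspec q.1 hq1 hq2).2.2.2.1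
      have h5p := (hfspec p.1 hp1 hp2).2.2.2.1
      rcases lt_trichotomy p.1 q.1 with h | h | h
      · exact absurd hw (h5q p.1 (by omega) h)
      · exact Sigma.ext h (heq_of_eq hj)
      · exact absurd hw.symm (h5p q.1 (by omega) h)
  calc ∑ i ∈ Finset.Icc 1 n, ∑ k ∈ Finset.range (K i + 1), 2 ^ k
      ≤ ∑ i ∈ Finset.Icc 1 n, (2 * (i - f i) + 1) := Finset.sum_le_sum hstep
    _ = 2 * ∑ i ∈ Finset.Icc 1 n, (i - f i) + n := by
        rw [Finset.sum_add_distrib, ← Finset.mul_sum]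
        simp [Nat.card_Icc]
    _ ≤ 2 * (σ * n) + n := by gcongr
    _ = n + 2 * σ * n := by ring
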